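/- Let G be a pentagraph, let C be a hole of length five in G, and let P be a local jump over C. Then the length of P is odd and at least three. -/

import Mathlib

open SimpleGraph

variable {V : Type*}

/-- A walk is an *induced (chordless) path* if it is a path and every edge of `G` joining
two of its vertices is an edge of the path. -/
def IsIndPath (G : SimpleGraph V) {u v : V} (p : G.Walk u v) : Prop :=
  p.IsPath ∧ ∀ x ∈ p.support, ∀ y ∈ p.support, G.Adj x y → s(x, y) ∈ p.edges

/-- The interior (set of internal vertices) of a walk from `u` to `v`. -/
def interiorSet {G : SimpleGraph V} {u v : V} (p : G.Walk u v) : Set V :=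
  {x | x ∈ p.support ∧ x ≠ u ∧ x ≠ v}

/-- An *induced cycle*: a cycle such that every edge of `G` joining two of its vertices is an
edge of the cycle. -/
def IsIndCycle (G : SimpleGraph V) {u : V} (c : G.Walk u u) : Prop :=
  c.IsCycle ∧ ∀ x ∈ c.support, ∀ y ∈ c.support, G.Adj x y → s(x, y) ∈ c.edges

/-- A *pentagraph*: every cycle has length at least five, and every induced cycle of odd
length has length exactly five. -/
def IsPentagraph (G : SimpleGraph V) : Prop :=
  (∀ (u : V) (c : G.Walk u u), c.IsCycle → 5 ≤ c.length) ∧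
  (∀ (u : V) (c : G.Walk u u), IsIndCycle G c → Odd c.length → c.length = 5)

/-- Removing the vertex set `X` disconnects `G`: two vertices outside `X` are not joined by
any path avoiding `X`. -/
def RemovalDisconnects (G : SimpleGraph V) (X : Set V) : Prop :=
  ∃ a b : ↥(Xᶜ), ¬ (G.induce Xᶜ).Reachable a b

/-- `G` admits a `P₃`-cutset: an induced three-vertex path whose deletion disconnects `G`. -/
def HasP3Cutset (G : SimpleGraph V) : Prop :=
  ∃ v₁ v₂ v₃ : V, G.Adj v₁ v₂ ∧ G.Adj v₂ v₃ ∧ ¬ G.Adj v₁ v₃ ∧ v₁ ≠ v₃ ∧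
    RemovalDisconnects G ({v₁, v₂, v₃} : Set V)

/-- `A` is (the vertex set of) a connected component of `G ∖ X`. -/
def IsCompOf (G : SimpleGraph V) (X : Set V) (A : Set V) : Prop :=
  A.Nonempty ∧ A ⊆ Xᶜ ∧ (G.induce A).Connected ∧
    ∀ u ∈ A, ∀ w ∈ Xᶜ, G.Adj u w → w ∈ A

/-- `G` admits a strong parity star-cutset. -/
def HasStrongParityStarCutset (G : SimpleGraph V) : Prop :=
  ∃ X : Set V, RemovalDisconnects G X ∧
    ∃ x ∈ X, (∀ y ∈ X, y ≠ x → G.Adj x y) ∧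
      ∃ A : Set V, IsCompOf G X A ∧
        (∀ y ∈ X, y ≠ x → ∀ z ∈ X, z ≠ x → y ≠ z →
          ∃ p : G.Walk y z, IsIndPath G p ∧ Even p.length ∧ interiorSet p ⊆ A) ∧
        (∃ a ∈ A, G.Adj x a)

/-- `G` admits a clique cutset. -/
def HasCliqueCutset (G : SimpleGraph V) : Prop :=
  ∃ X : Set V, G.IsClique X ∧ RemovalDisconnects G X

/-- Vertices of the Petersen graph: 2-element subsets of a 5-element set. -/
abbrev KVert : Type := {s : Finset (Fin 5) // s.card = 2}

/-- The Petersen graph, as the Kneser graph on 2-element subsets of a 5-element set. -/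
def petersen : SimpleGraph KVert where
  Adj a b := Disjoint (a : Finset (Fin 5)) (b : Finset (Fin 5))
  symm := ⟨fun a b h => Disjoint.symm h⟩
  loopless := by
    constructor
    intro a h
    rw [disjoint_self] at h
    have h2 := a.2
    simp [h] at h2

def pA : KVert := ⟨{0, 1}, by decide⟩
def pB : KVert := ⟨{2, 3}, by decide⟩

/-- The Petersen graph minus one edge. -/
def petersen0 : SimpleGraph KVert := petersen.deleteEdges {s(pA, pB)}

/-- The Petersen graph minus one vertex. -/
def petersen1 : SimpleGraph {x : KVert // x ≠ pA} := petersen.induce {x : KVert | x ≠ pA}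

/-- The Petersen graph minus two adjacent vertices. -/
def petersen2 : SimpleGraph {x : KVert // x ≠ pA ∧ x ≠ pB} :=
  petersen.induce {x : KVert | x ≠ pA ∧ x ≠ pB}

/-- Two nonadjacent vertices are *linked*: joined by two induced paths, both of length at
least three, of different parity. -/
def Linked (H : SimpleGraph V) (s t : V) : Prop :=
  ∃ (p q : H.Walk s t), IsIndPath H p ∧ IsIndPath H q ∧
    3 ≤ p.length ∧ 3 ≤ q.length ∧ p.length % 2 ≠ q.length % 2

/-- Two vertices are *odd-linked*: joined by an induced path of odd length at least five. -/
def OddLinked (H : SimpleGraph V) (s t : V) : Prop :=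
  ∃ p : H.Walk s t, IsIndPath H p ∧ Odd p.length ∧ 5 ≤ p.length

/-- A *jump* over a hole with vertex set `C`: an induced path whose ends are distinct,
nonadjacent vertices of `C` and whose other vertices avoid `C`. -/
def IsJump (G : SimpleGraph V) (C : Set V) {s t : V} (P : G.Walk s t) : Prop :=
  IsIndPath G P ∧ s ∈ C ∧ t ∈ C ∧ s ≠ t ∧ ¬ G.Adj s t ∧
    ∀ x ∈ P.support, x ∈ C → x = s ∨ x = t

/-- A jump *across* the vertex `c` of `C`. -/
def IsJumpAcross (G : SimpleGraph V) (C : Set V) {s t : V} (P : G.Walk s t) (c : V) : Prop :=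
  IsJump G C P ∧ c ∈ C ∧ G.Adj c s ∧ G.Adj c t

/-- A *local* jump: no vertex of `C` other than `c, s, t` has a neighbour in the interior. -/
def IsLocalJump (G : SimpleGraph V) (C : Set V) {s t : V} (P : G.Walk s t) : Prop :=
  IsJump G C P ∧ ∃ c : V, c ∈ C ∧ G.Adj c s ∧ G.Adj c t ∧
    ∀ x ∈ C, x ≠ c → x ≠ s → x ≠ t → ∀ y ∈ interiorSet P, ¬ G.Adj x y

/-- A *short* jump: a jump of length three. -/
def IsShortJump (G : SimpleGraph V) (C : Set V) {s t : V} (P : G.Walk s t) : Prop :=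
  IsJump G C P ∧ P.length = 3

/-- `G` is three-connected. -/
def ThreeConnected (G : SimpleGraph V) : Prop :=
  4 ≤ Nat.card V ∧ ∀ S : Set V, S.ncard < 3 → (G.induce Sᶜ).Connected

lemma two_le_length_of_not_adj {G : SimpleGraph V} {s t : V} (P : G.Walk s t)
    (hst : s ≠ t) (hst' : ¬ G.Adj s t) : 2 ≤ P.length := by
  cases P with
  | nil => exact (hst rfl).elim
  | cons h q =>
    cases q with
    | nil => exact (hst' h).elim
    | cons h' q' => simp [Walk.length_cons]

lemma length_two_decomp {G : SimpleGraph V} {s t : V} (P : G.Walk s t) (h : P.length = 2) :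
    ∃ (m : V) (h1 : G.Adj s m) (h2 : G.Adj m t), P = Walk.cons h1 (Walk.cons h2 Walk.nil) := by
  cases P with
  | nil => simp at h
  | cons h1 q =>
    cases q with
    | nil => simp at h
    | cons h2 q' =>
      cases q' with
      | nil => exact ⟨_, h1, h2, rfl⟩
      | cons h3 q'' => simp at h

lemma five_cycle_structure (G : SimpleGraph V) (w : V) (cw : G.Walk w w)
    (hcyc : cw.IsCycle ∧ ∀ x ∈ cw.support, ∀ y ∈ cw.support, G.Adj x y → s(x, y) ∈ cw.edges)
    (hlen : cw.length = 5)
    {s t c : V} (hs : s ∈ cw.support) (ht : t ∈ cw.support) (hc : c ∈ cw.support)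
    (hcs : G.Adj c s) (hct : G.Adj c t) (hst : s ≠ t) (hst' : ¬ G.Adj s t) :
    ∃ a b : V, G.Adj s a ∧ G.Adj a b ∧ G.Adj b t ∧ a ∈ cw.support ∧ b ∈ cw.support ∧
      a ≠ c ∧ a ≠ s ∧ a ≠ t ∧ b ≠ c ∧ b ≠ s ∧ b ≠ t ∧ a ≠ b ∧ ¬ G.Adj s b ∧ ¬ G.Adj t a := by
  cases cw with
  | nil => simp at hlen
  | cons h1 p1 =>
  cases p1 with
  | nil => simp at hlen
  | cons h2 p2 =>
  cases p2 with
  | nil => simp at hlen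
  | cons h3 p3 =>
  cases p3 with
  | nil => simp at hlen
  | cons h4 p4 =>
  cases p4 with
  | nil => simp at hlen
  | cons h5 p5 =>
  cases p5 with
  | cons h6 p6 => simp at hlen
  | nil =>
  rename_i v1 v2 v3 v4
  obtain ⟨hcycle, hind⟩ := hcyc
  have hnd := hcycle.2
  simp [List.nodup_cons] at hnd
  obtain ⟨⟨d12, d13, d14, d1w⟩, ⟨d23, d24, d2w⟩, ⟨d34, d3w⟩, d4w⟩ := hnd
  have d21 : ¬ v2 = v1 := fun h => d12 h.symm
  have d31 : ¬ v3 = v1 := fun h => d13 h.symm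
  have d41 : ¬ v4 = v1 := fun h => d14 h.symm
  have dw1 : ¬ w = v1 := fun h => d1w h.symm
  have d32 : ¬ v3 = v2 := fun h => d23 h.symm
  have d42 : ¬ v4 = v2 := fun h => d24 h.symm
  have dw2 : ¬ w = v2 := fun h => d2w h.symm
  have d43 : ¬ v4 = v3 := fun h => d34 h.symm
  have dw3 : ¬ w = v3 := fun h => d3w h.symm
  have dw4 : ¬ w = v4 := fun h => d4w h.symm
  have h1' := h1.symm
  have h2' := h2.symm
  have h3' := h3.symm
  have h4' := h4.symm
  have h5' := h5.symm
  have nw2 : ¬ G.Adj w v2 := by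
    intro h
    have := hind w (by simp) v2 (by simp) h
    simp [Sym2.eq, Sym2.rel_iff'] at this
    tauto
  have nw3 : ¬ G.Adj w v3 := by
    intro h
    have := hind w (by simp) v3 (by simp) h
    simp [Sym2.eq, Sym2.rel_iff'] at this
    tauto
  have n13 : ¬ G.Adj v1 v3 := by
    intro h
    have := hind v1 (by simp) v3 (by simp) h
    simp [Sym2.eq, Sym2.rel_iff'] at this
    tauto
  have n14 : ¬ G.Adj v1 v4 := by
    intro h
    have := hind v1 (by simp) v4 (by simp) h
    simp [Sym2.eq, Sym2.rel_iff'] at this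
    tauto
  have n24 : ¬ G.Adj v2 v4 := by
    intro h
    have := hind v2 (by simp) v4 (by simp) h
    simp [Sym2.eq, Sym2.rel_iff'] at this
    tauto
  have nw2' : ¬ G.Adj v2 w := fun h => nw2 h.symm
  have nw3' : ¬ G.Adj v3 w := fun h => nw3 h.symm
  have n13' : ¬ G.Adj v3 v1 := fun h => n13 h.symm
  have n14' : ¬ G.Adj v4 v1 := fun h => n14 h.symm
  have n24' : ¬ G.Adj v4 v2 := fun h => n24 h.symm
  simp only [Walk.support_cons, Walk.support_nil, List.mem_cons, List.not_mem_nil,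
    or_false] at hs ht hc
  rcases hs with rfl | rfl | rfl | rfl | rfl | rfl <;>
  rcases ht with rfl | rfl | rfl | rfl | rfl | rfl <;>
  rcases hc with rfl | rfl | rfl | rfl | rfl | rfl <;>
  first
    | exact (G.irrefl hcs).elim
    | exact (G.irrefl hct).elim
    | exact (hst rfl).elim
    | exact absurd hcs (by assumption)
    | exact absurd hct (by assumption)
    | exact absurd (by assumption : G.Adj s t) hst'
    | exact ⟨v2, v3, by assumption, by assumption, by assumption, by simp, by simp,
        by assumption, by assumption, by assumption, by assumption, by assumption,
        by assumption, by assumption, by assumption, by assumption⟩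
    | exact ⟨v3, v2, by assumption, by assumption, by assumption, by simp, by simp,
        by assumption, by assumption, by assumption, by assumption, by assumption,
        by assumption, by assumption, by assumption, by assumption⟩
    | exact ⟨v4, v3, by assumption, by assumption, by assumption, by simp, by simp,
        by assumption, by assumption, by assumption, by assumption, by assumption,
        by assumption, by assumption, by assumption, by assumption⟩
    | exact ⟨v3, v4, by assumption, by assumption, by assumption, by simp, by simp,
        by assumption, by assumption, by assumption, by assumption, by assumption,
        by assumption, by assumption, by assumption, by assumption⟩
    | exact ⟨w, v4, by assumption, by assumption, by assumption, by simp, by simp,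
        by assumption, by assumption, by assumption, by assumption, by assumption,
        by assumption, by assumption, by assumption, by assumption⟩
    | exact ⟨v4, w, by assumption, by assumption, by assumption, by simp, by simp,
        by assumption, by assumption, by assumption, by assumption, by assumption,
        by assumption, by assumption, by assumption, by assumption⟩
    | exact ⟨v1, w, by assumption, by assumption, by assumption, by simp, by simp,
        by assumption, by assumption, by assumption, by assumption, by assumption,
        by assumption, by assumption, by assumption, by assumption⟩
    | exact ⟨w, v1, by assumption, by assumption, by assumption, by simp, by simp,
        by assumption, by assumption, by assumption, by assumption, by assumption,
        by assumption, by assumption, by assumption, by assumption⟩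
    | exact ⟨v2, v1, by assumption, by assumption, by assumption, by simp, by simp,
        by assumption, by assumption, by assumption, by assumption, by assumption,
        by assumption, by assumption, by assumption, by assumption⟩
    | exact ⟨v1, v2, by assumption, by assumption, by assumption, by simp, by simp,
        by assumption, by assumption, by assumption, by assumption, by assumption,
        by assumption, by assumption, by assumption, by assumption⟩

/-- every local jump over a pentagon in a pentagraph has odd length at
least three. -/
theorem local_jump_odd_length {V : Type*} [Fintype V] (G : SimpleGraph V)
    (hG : IsPentagraph G)
    (w : V) (cw : G.Walk w w) (hcyc : IsIndCycle G cw) (hlen : cw.length = 5)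
    {s t : V} (P : G.Walk s t) (hP : IsLocalJump G {x | x ∈ cw.support} P) :
    Odd P.length ∧ 3 ≤ P.length := by
  obtain ⟨⟨hPind, hsC, htC, hst, hst', hPsupp⟩, c, hcC, hcs, hct, hlocal⟩ := hP
  obtain ⟨a, b, hsa, hab, hbt, haC, hbC, hac, has, hat, hbc, hbs, hbtne, habne, hsb, hta⟩ :=
    five_cycle_structure G w cw hcyc hlen hsC htC hcC hcs hct hst hst'
  have hPa : a ∉ P.support := by
    intro h
    rcases hPsupp a h haC with rfl | rfl
    · exact has rfl
    · exact hat rfl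
  have hPb : b ∉ P.support := by
    intro h
    rcases hPsupp b h hbC with rfl | rfl
    · exact hbs rfl
    · exact hbtne rfl
  have hcs' : c ≠ s := hcs.ne
  have hct' : c ≠ t := hct.ne
  have h2 : 2 ≤ P.length := two_le_length_of_not_adj P hst hst'
  have hne2 : P.length ≠ 2 := by
    intro hl2
    obtain ⟨m, h1, h2', rfl⟩ := length_two_decomp P hl2
    have hms : m ≠ s := h1.ne'
    have hmt : m ≠ t := h2'.ne
    have hmc : m ≠ c := by
      intro h
      have hmC : m ∈ {x | x ∈ cw.support} := by rw [h]; exact hcC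
      rcases hPsupp m (by simp) hmC with rfl | rfl
      · exact hcs' h.symm
      · exact hct' h.symm
    have hsm : ¬ s = m := fun h => hms h.symm
    have hcm : ¬ c = m := fun h => hmc h.symm
    have htc : ¬ t = c := fun h => hct' h.symm
    have hsc : ¬ s = c := fun h => hcs' h.symm
    have hW : (Walk.cons hcs (Walk.cons h1 (Walk.cons h2' (Walk.cons hct.symm Walk.nil)))).IsCycle := by
      rw [Walk.isCycle_def, Walk.isTrail_def]
      refine ⟨?_, by simp, ?_⟩
      · simp only [Walk.edges_cons, Walk.edges_nil, List.nodup_cons, List.mem_cons,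
          List.not_mem_nil, or_false, List.nodup_nil, and_true, Sym2.eq, Sym2.rel_iff']
        simp [Sym2.eq, Sym2.rel_iff']
        tauto
      · simp
        tauto
    have := hG.1 c _ hW
    simp at this
  have h3 : 3 ≤ P.length := by omega
  refine ⟨?_, h3⟩
  rw [← Nat.not_even_iff_odd]
  intro heven
  -- the long cycle
  set Q : G.Walk t s :=
    Walk.cons hbt.symm (Walk.cons hab.symm (Walk.cons hsa.symm Walk.nil)) with hQ
  set W : G.Walk s s := P.append Q with hWdef
  have hWedges : W.edges = P.edges ++ [s(t, b), s(b, a), s(a, s)] := by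
    rw [hWdef, Walk.edges_append, hQ]; simp
  have hWsupp : W.support = P.support ++ [b, a, s] := by
    rw [hWdef, Walk.support_append, hQ]; simp
  have hWlen : W.length = P.length + 3 := by
    rw [hWdef, Walk.length_append, hQ]; simp
  have hsupmem : ∀ x, x ∈ W.support → x ∈ P.support ∨ x = b ∨ x = a := by
    intro x hx
    rw [hWsupp] at hx
    simp at hx
    rcases hx with h | h | h | h
    · exact Or.inl h
    · exact Or.inr (Or.inl h)
    · exact Or.inr (Or.inr h)
    · subst h; exact Or.inl P.start_mem_support
  have hWcyc : W.IsCycle := by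
    rw [Walk.isCycle_def, Walk.isTrail_def]
    refine ⟨?_, ?_, ?_⟩
    · rw [hWedges]
      rw [List.nodup_append]
      have hts : ¬ t = s := fun h => hst h.symm
      have hta' : ¬ t = a := fun h => hat h.symm
      have htb : ¬ t = b := fun h => hbtne h.symm
      have hba : ¬ b = a := fun h => habne h.symm
      refine ⟨hPind.1.1.edges_nodup, ?_, ?_⟩
      · simp [Sym2.eq, Sym2.rel_iff']
        tauto
      · intro e he e' hmem heq
        rw [← heq] at hmem
        simp at hmem
        rcases hmem with h | h | h
        · subst h; exact hPb (Walk.snd_mem_support_of_mem_edges P he)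
        · subst h; exact hPb (Walk.fst_mem_support_of_mem_edges P he)
        · subst h; exact hPa (Walk.fst_mem_support_of_mem_edges P he)
    · intro hnil
      have h' := hWlen
      rw [hnil] at h'
      simp at h'
    · have htail : W.support.tail = P.support.tail ++ [b, a, s] := by
        rw [hWsupp]
        conv_lhs => rw [P.support_eq_cons]
        simp
      rw [htail, List.nodup_append]
      have hsnd : P.support.Nodup := hPind.1.2
      have hs_tail : s ∉ P.support.tail := by
        have h'' := hsnd
        rw [P.support_eq_cons] at h''
        exact (List.nodup_cons.mp h'').1
      refine ⟨hsnd.sublist (List.tail_sublist _), ?_, ?_⟩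
      · simp only [List.nodup_cons, List.mem_cons, List.not_mem_nil, or_false,
          List.nodup_nil, and_true]
        exact ⟨fun h => (h.elim (fun h => habne h.symm) hbs), has, not_false⟩
      · intro x hx y' hmem hxy'
        rw [← hxy'] at hmem
        have hxP := List.mem_of_mem_tail hx
        simp at hmem
        rcases hmem with rfl | rfl | rfl
        · exact hPb hxP
        · exact hPa hxP
        · exact hs_tail hx
  have hWind : IsIndCycle G W := by
    refine ⟨hWcyc, ?_⟩
    intro x hx y hy hxy
    have hintx : ∀ z, z ∈ P.support → z ≠ s → z ≠ t → z ∈ interiorSet P :=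
      fun z hz h1 h2 => ⟨hz, h1, h2⟩
    rw [hWedges]
    rcases hsupmem x hx with hxP | rfl | rfl <;> rcases hsupmem y hy with hyP | rfl | rfl
    · exact List.mem_append_left _ (hPind.2 x hxP y hyP hxy)
    · -- y = b
      by_cases hxs : x = s
      · subst hxs; exact (hsb hxy).elim
      · by_cases hxt : x = t
        · subst hxt; simp
        · exact (hlocal _ hbC hbc hbs hbtne x (hintx x hxP hxs hxt) hxy.symm).elim
    · -- y = a
      by_cases hxs : x = s
      · subst hxs; simp [Sym2.eq, Sym2.rel_iff']
      · by_cases hxt : x = t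
        · subst hxt; exact (hta hxy).elim
        · exact (hlocal _ haC hac has hat x (hintx x hxP hxs hxt) hxy.symm).elim
    · -- x = b, y ∈ P
      by_cases hys : y = s
      · subst hys; exact (hsb hxy.symm).elim
      · by_cases hyt : y = t
        · subst hyt; simp [Sym2.eq, Sym2.rel_iff']
        · exact (hlocal _ hbC hbc hbs hbtne y (hintx y hyP hys hyt) hxy).elim
    · exact (G.irrefl hxy).elim
    · simp
    · -- x = a, y ∈ P
      by_cases hys : y = s
      · subst hys; simp [Sym2.eq, Sym2.rel_iff']
      · by_cases hyt : y = t
        · subst hyt; exact (hta hxy.symm).elim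
        · exact (hlocal _ haC hac has hat y (hintx y hyP hys hyt) hxy).elim
    · simp [Sym2.eq, Sym2.rel_iff']
    · exact (G.irrefl hxy).elim
  have hOddW : Odd W.length := by
    rw [hWlen]
    rcases heven with ⟨k, hk⟩
    exact ⟨k + 1, by omega⟩
  have := hG.2 s W hWind hOddW
  rw [hWlen] at this
  omega
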